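/- For any α ∈ (0,1) and B > 0, the function L₂(λ) = (2/(1+2λ))·√(Q_{1−α}(g(λ,B))·(λ² + (1+λ)²)), with g(λ,B) = λ²B²/(λ² + (1+λ)²), attains its minimum over λ ∈ [0,∞) at some λ ∈ (0, ∞); in particular its right derivative at λ = 0 equals −2√(Q_{1−α}(0)) < 0 and L₂ is eventually increasing. -/

import Mathlib

open MeasureTheory

/-- The standard normal CDF. -/
noncomputable def stdNormalCDF (x : ℝ) : ℝ :=
  ∫ t in Set.Iic x, (Real.sqrt (2 * Real.pi))⁻¹ * Real.exp (-t ^ 2 / 2)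

/-- Proposition 1: L₂(λ; α, B) attains its minimum over λ ∈ [0,∞) at some
λ ∈ (0, ∞); moreover its right derivative at λ = 0 equals −2√(Q(0)) < 0 and L₂ is
eventually increasing.  Here Q = Q_{1−α} is the (1−α)th noncentral χ²(1, ·)
quantile, assumed continuously differentiable, strictly positive, with strictly
positive derivative on [0, ∞). -/
theorem stmt_14 (α B : ℝ) (hα : 0 < α) (hα1 : α < 1) (hB : 0 < B)
    (Q Q' : ℝ → ℝ)
    (hQquant : ∀ γ, 0 ≤ γ →
      stdNormalCDF (Real.sqrt (Q γ) - Real.sqrt γ) -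
        stdNormalCDF (-Real.sqrt (Q γ) - Real.sqrt γ) = 1 - α)
    (hQpos : ∀ γ, 0 ≤ γ → 0 < Q γ)
    (hQderiv : ∀ γ, 0 ≤ γ → HasDerivAt Q (Q' γ) γ)
    (hQ'pos : ∀ γ, 0 ≤ γ → 0 < Q' γ)
    (hQ'cont : ContinuousOn Q' (Set.Ici 0))
    (g : ℝ → ℝ) (hg : ∀ lam, g lam = lam ^ 2 * B ^ 2 / (lam ^ 2 + (1 + lam) ^ 2))
    (L₂ : ℝ → ℝ)
    (hL₂ : ∀ lam, L₂ lam =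
      2 / (1 + 2 * lam) * Real.sqrt (Q (g lam) * (lam ^ 2 + (1 + lam) ^ 2))) :
    (∃ lam : ℝ, 0 < lam ∧ ∀ μ, 0 ≤ μ → L₂ lam ≤ L₂ μ) ∧
    (HasDerivWithinAt L₂ (-2 * Real.sqrt (Q 0)) (Set.Ici 0) 0 ∧
      -2 * Real.sqrt (Q 0) < 0) ∧
    (∃ Λ : ℝ, 0 ≤ Λ ∧ MonotoneOn L₂ (Set.Ici Λ)) := by
  -- basic facts
  have hD : ∀ l : ℝ, 0 < l ^ 2 + (1 + l) ^ 2 := by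
    intro l; nlinarith [sq_nonneg (2 * l + 1)]
  have hg0 : ∀ l : ℝ, 0 ≤ g l := by
    intro l; rw [hg]; positivity
  have hgle : ∀ l : ℝ, 0 ≤ l → g l ≤ B ^ 2 / 2 := by
    intro l hl; rw [hg, div_le_div_iff₀ (hD l) (by norm_num)]
    nlinarith [sq_nonneg B]
  have hQgpos : ∀ l : ℝ, 0 < Q (g l) := fun l => hQpos _ (hg0 l)
  -- the derivative of L₂ at any l > -1/2
  have key : ∀ l : ℝ, -(1/2) < l → HasDerivAt L₂
      ((Q' (g l) * B ^ 2 * (1 + 2 * l) * (2 * l ^ 2 + 2 * l) / (l ^ 2 + (1 + l) ^ 2)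
        - 2 * Q (g l)) /
        ((1 + 2 * l) ^ 2 * Real.sqrt (Q (g l) * (l ^ 2 + (1 + l) ^ 2)))) l := by
    intro l hl
    have hu : (1 + 2 * l) ≠ 0 := by intro h; linarith
    have hdne : (l ^ 2 + (1 + l) ^ 2) ≠ 0 := (hD l).ne'
    -- derivative of the denominator polynomial
    have hd : HasDerivAt (fun x : ℝ => x ^ 2 + (1 + x) ^ 2) (2 * l + 2 * (1 + l)) l := by
      have h1 : HasDerivAt (fun x : ℝ => x ^ 2) (2 * l) l := by
        simpa using hasDerivAt_pow 2 l
      have h2 : HasDerivAt (fun x : ℝ => (1 + x) ^ 2) (2 * (1 + l)) l := by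
        have := ((hasDerivAt_id l).const_add 1).fun_pow 2
        simpa using this
      exact h1.add h2
    have hnum : HasDerivAt (fun x : ℝ => x ^ 2 * B ^ 2) (2 * l * B ^ 2) l := by
      simpa using (hasDerivAt_pow 2 l).mul_const (B ^ 2)
    have hgd : HasDerivAt g
        ((2 * l * B ^ 2 * (l ^ 2 + (1 + l) ^ 2) - l ^ 2 * B ^ 2 * (2 * l + 2 * (1 + l))) /
          (l ^ 2 + (1 + l) ^ 2) ^ 2) l := by
      have : HasDerivAt (fun x : ℝ => x ^ 2 * B ^ 2 / (x ^ 2 + (1 + x) ^ 2))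
          ((2 * l * B ^ 2 * (l ^ 2 + (1 + l) ^ 2) - l ^ 2 * B ^ 2 * (2 * l + 2 * (1 + l))) /
            (l ^ 2 + (1 + l) ^ 2) ^ 2) l := hnum.div hd hdne
      exact this.congr_of_eventuallyEq (Filter.Eventually.of_forall fun x => (hg x))
    set gd : ℝ := (2 * l * B ^ 2 * (l ^ 2 + (1 + l) ^ 2) - l ^ 2 * B ^ 2 * (2 * l + 2 * (1 + l))) /
      (l ^ 2 + (1 + l) ^ 2) ^ 2 with hgdval
    have hQg : HasDerivAt (fun x => Q (g x)) (Q' (g l) * gd) l :=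
      (hQderiv (g l) (hg0 l)).comp l hgd
    have hF : HasDerivAt (fun x => Q (g x) * (x ^ 2 + (1 + x) ^ 2))
        (Q' (g l) * gd * (l ^ 2 + (1 + l) ^ 2) + Q (g l) * (2 * l + 2 * (1 + l))) l :=
      hQg.mul hd
    have hFpos : 0 < Q (g l) * (l ^ 2 + (1 + l) ^ 2) := mul_pos (hQgpos l) (hD l)
    set Fd : ℝ := Q' (g l) * gd * (l ^ 2 + (1 + l) ^ 2) + Q (g l) * (2 * l + 2 * (1 + l))
      with hFdval
    have hsqrt : HasDerivAt (fun x => Real.sqrt (Q (g x) * (x ^ 2 + (1 + x) ^ 2)))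
        (Fd / (2 * Real.sqrt (Q (g l) * (l ^ 2 + (1 + l) ^ 2)))) l := hF.sqrt hFpos.ne'
    have hlin : HasDerivAt (fun x : ℝ => 1 + 2 * x) 2 l := by
      simpa using ((hasDerivAt_id l).const_mul 2).const_add 1
    have hinv : HasDerivAt (fun x : ℝ => 2 / (1 + 2 * x))
        ((0 * (1 + 2 * l) - 2 * 2) / (1 + 2 * l) ^ 2) l :=
      (hasDerivAt_const l 2).div hlin hu
    have hmul := hinv.mul hsqrt
    have hLfun : HasDerivAt L₂
        ((0 * (1 + 2 * l) - 2 * 2) / (1 + 2 * l) ^ 2 *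
            Real.sqrt (Q (g l) * (l ^ 2 + (1 + l) ^ 2)) +
          2 / (1 + 2 * l) * (Fd / (2 * Real.sqrt (Q (g l) * (l ^ 2 + (1 + l) ^ 2))))) l :=
      hmul.congr_of_eventuallyEq (Filter.Eventually.of_forall fun x => (hL₂ x))
    convert hLfun using 1
    set s : ℝ := Real.sqrt (Q (g l) * (l ^ 2 + (1 + l) ^ 2)) with hsval
    have hspos : 0 < s := Real.sqrt_pos.mpr hFpos
    have hs2 : s * s = Q (g l) * (l ^ 2 + (1 + l) ^ 2) := Real.mul_self_sqrt hFpos.le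
    have hcancel : ((1 + 2 * l) ^ 2 * s) ≠ 0 := by positivity
    refine mul_right_cancel₀ hcancel ?_
    rw [div_mul_cancel₀ _ hcancel]
    have hrhs : ((0 * (1 + 2 * l) - 2 * 2) / (1 + 2 * l) ^ 2 * s +
        2 / (1 + 2 * l) * (Fd / (2 * s))) * ((1 + 2 * l) ^ 2 * s) =
        -4 * (s * s) + (1 + 2 * l) * Fd := by
      field_simp
      ring
    rw [hrhs, hs2, hFdval, hgdval]
    field_simp
    ring
  -- Part 2 : derivative at 0
  have hg00 : g 0 = 0 := by rw [hg]; norm_num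
  have hQ0pos : 0 < Q 0 := hQpos 0 le_rfl
  have hderiv0 : HasDerivAt L₂ (-2 * Real.sqrt (Q 0)) 0 := by
    have h0 := key 0 (by norm_num)
    rw [hg00] at h0
    convert h0 using 1
    rw [show ((0:ℝ) ^ 2 + (1 + 0) ^ 2) = 1 by norm_num]
    rw [mul_one]
    rw [show Q' 0 * B ^ 2 * (1 + 2 * 0) * (2 * 0 ^ 2 + 2 * 0) / 1 = 0 by ring]
    rw [show ((1:ℝ) + 2 * 0) ^ 2 = 1 by norm_num, one_mul, zero_sub, neg_div,
      mul_div_assoc, Real.div_sqrt]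
    ring
  have hsqrtQ0 : 0 < Real.sqrt (Q 0) := Real.sqrt_pos.mpr hQ0pos
  have hneg : -2 * Real.sqrt (Q 0) < 0 := by nlinarith
  -- Part 3 : eventually monotone
  have hQcont : ContinuousOn Q (Set.Ici 0) := fun x hx =>
    ((hQderiv x hx).continuousAt).continuousWithinAt
  obtain ⟨γM, hγM, hMmax⟩ := isCompact_Icc.exists_isMaxOn
    (α := ℝ) (s := Set.Icc 0 (B ^ 2 / 2)) ⟨0, le_rfl, by positivity⟩
    (hQcont.mono (fun x hx => hx.1))
  obtain ⟨γm, hγm, hmmin⟩ := isCompact_Icc.exists_isMinOn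
    (α := ℝ) (s := Set.Icc 0 (B ^ 2 / 2)) ⟨0, le_rfl, by positivity⟩
    (hQ'cont.mono (fun x hx => hx.1))
  set M : ℝ := Q γM with hMdef
  set m : ℝ := Q' γm with hmdef
  have hmpos : 0 < m := hQ'pos γm hγm.1
  have hMpos : 0 < M := hQpos γM hγM.1
  set Λ : ℝ := max 1 (5 * M / (2 * m * B ^ 2)) with hΛdef
  have hΛ1 : (1:ℝ) ≤ Λ := le_max_left _ _
  have hΛ0 : (0:ℝ) ≤ Λ := by linarith
  -- derivative positive beyond Λ
  have hdpos : ∀ l : ℝ, Λ < l → 0 < (Q' (g l) * B ^ 2 * (1 + 2 * l) * (2 * l ^ 2 + 2 * l) /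
      (l ^ 2 + (1 + l) ^ 2) - 2 * Q (g l)) /
      ((1 + 2 * l) ^ 2 * Real.sqrt (Q (g l) * (l ^ 2 + (1 + l) ^ 2))) := by
    intro l hl
    have hl1 : (1:ℝ) < l := lt_of_le_of_lt hΛ1 hl
    have hglmem : g l ∈ Set.Icc (0:ℝ) (B ^ 2 / 2) := ⟨hg0 l, hgle l (by linarith)⟩
    have hqM : Q (g l) ≤ M := hMmax hglmem
    have hq'm : m ≤ Q' (g l) := hmmin hglmem
    have ht : 4 * l / 5 ≤ (1 + 2 * l) * (2 * l ^ 2 + 2 * l) / (l ^ 2 + (1 + l) ^ 2) := by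
      rw [div_le_div_iff₀ (by norm_num) (hD l)]
      nlinarith [hl1]
    have h1 : m * B ^ 2 * (4 * l / 5) ≤
        Q' (g l) * B ^ 2 * ((1 + 2 * l) * (2 * l ^ 2 + 2 * l) / (l ^ 2 + (1 + l) ^ 2)) := by
      apply mul_le_mul
      · nlinarith [hq'm, sq_nonneg B]
      · exact ht
      · linarith
      · exact mul_nonneg (hQ'pos _ (hg0 l)).le (sq_nonneg B)
    have hlgt : 5 * M / (2 * m * B ^ 2) < l := lt_of_le_of_lt (le_max_right _ _) hl
    have h2 : 2 * M < m * B ^ 2 * (4 * l / 5) := by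
      rw [div_lt_iff₀ (by positivity)] at hlgt
      nlinarith [hlgt]
    have hre : Q' (g l) * B ^ 2 * (1 + 2 * l) * (2 * l ^ 2 + 2 * l) / (l ^ 2 + (1 + l) ^ 2) =
        Q' (g l) * B ^ 2 * ((1 + 2 * l) * (2 * l ^ 2 + 2 * l) / (l ^ 2 + (1 + l) ^ 2)) := by
      ring
    have hnumpos : 0 < Q' (g l) * B ^ 2 * (1 + 2 * l) * (2 * l ^ 2 + 2 * l) /
        (l ^ 2 + (1 + l) ^ 2) - 2 * Q (g l) := by
      rw [hre]; linarith
    have hden : 0 < (1 + 2 * l) ^ 2 * Real.sqrt (Q (g l) * (l ^ 2 + (1 + l) ^ 2)) := by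
      apply mul_pos (by nlinarith)
      exact Real.sqrt_pos.mpr (mul_pos (hQgpos l) (hD l))
    exact div_pos hnumpos hden
  have hmono : MonotoneOn L₂ (Set.Ici Λ) := by
    have hsm : StrictMonoOn L₂ (Set.Ici Λ) := by
      apply strictMonoOn_of_deriv_pos (convex_Ici Λ)
      · intro x hx
        exact ((key x (by simp only [Set.mem_Ici] at hx; linarith)).continuousAt).continuousWithinAt
      · intro x hx
        rw [interior_Ici] at hx
        rw [(key x (by simp only [Set.mem_Ioi] at hx; linarith)).deriv]
        exact hdpos x hx
    exact hsm.monotoneOn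
  -- Part 1 : the minimum is attained at a positive point
  -- find a point with smaller value than at 0
  have hslope : Filter.Tendsto (slope L₂ 0) (nhdsWithin 0 (Set.Ioi 0))
      (nhds (-2 * Real.sqrt (Q 0))) :=
    (hasDerivAt_iff_tendsto_slope.mp hderiv0).mono_left
      (nhdsWithin_mono 0 (fun x hx => ne_of_gt hx))
  have hev : ∀ᶠ x in nhdsWithin 0 (Set.Ioi 0), slope L₂ 0 x < 0 :=
    hslope.eventually (gt_mem_nhds hneg)
  obtain ⟨x, hxslope, hxpos⟩ := (hev.and self_mem_nhdsWithin).exists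
  have hx0 : (0:ℝ) < x := hxpos
  have hxlt : L₂ x < L₂ 0 := by
    rw [slope_def_field, div_lt_iff₀ (by linarith : (0:ℝ) < x - 0)] at hxslope
    linarith
  set c : ℝ := max x Λ with hcdef
  have hcx : x ≤ c := le_max_left _ _
  have hcΛ : Λ ≤ c := le_max_right _ _
  have hc0 : (0:ℝ) ≤ c := le_trans hΛ0 hcΛ
  have hconts : ContinuousOn L₂ (Set.Icc 0 c) := fun y hy =>
    ((key y (by have := hy.1; simp only [Set.mem_Icc] at hy; linarith [hy.1])).continuousAt).continuousWithinAt
  obtain ⟨lam, hlammem, hlammin⟩ :=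
    isCompact_Icc.exists_isMinOn (α := ℝ) (s := Set.Icc 0 c) ⟨0, le_rfl, hc0⟩ hconts
  have hlammin' : ∀ y ∈ Set.Icc (0:ℝ) c, L₂ lam ≤ L₂ y := fun y hy => hlammin hy
  have hlampos : 0 < lam := by
    rcases eq_or_lt_of_le hlammem.1 with h | h
    · exfalso
      have hle : L₂ lam ≤ L₂ x := hlammin' x ⟨hx0.le, hcx⟩
      rw [← h] at hle
      linarith
    · exact h
  refine ⟨⟨lam, hlampos, fun μ hμ => ?_⟩, ⟨hderiv0.hasDerivWithinAt, hneg⟩, ⟨Λ, hΛ0, hmono⟩⟩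
  by_cases hμc : μ ≤ c
  · exact hlammin' μ ⟨hμ, hμc⟩
  · push_neg at hμc
    calc L₂ lam ≤ L₂ c := hlammin' c ⟨hc0, le_rfl⟩
    _ ≤ L₂ μ := hmono (Set.mem_Ici.mpr hcΛ) (Set.mem_Ici.mpr (le_trans hcΛ hμc.le)) hμc.le
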